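/- Let n ≥ 2, let P be the set of the 2^n − 1 non-zero vectors of 𝔽_2^n, and for 2 ≤ k ≤ 2^n − 2 let B_k be the family of all k-element subsets of P whose elements sum to zero. Then D_k = (P, B_k) is a 2-(2^n − 1, k, λ_k) design: there is a constant λ_k such that every pair of distinct non-zero vectors is contained in exactly λ_k members of B_k. -/

import Mathlib

open Finset

variable {n : ℕ}

abbrev V (n : ℕ) := Fin n → ZMod 2

lemma li_pair {x y : V n} (hx : x ≠ 0) (hy : y ≠ 0) (hxy : x ≠ y) :
    LinearIndependent (ZMod 2) ((↑) : ({x, y} : Set (V n)) → V n) := by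
  have h : LinearIndependent (ZMod 2) ![x, y] := by
    rw [LinearIndependent.pair_iff' hx]
    intro a
    have ha : ∀ b : ZMod 2, b = 0 ∨ b = 1 := by decide
    rcases ha a with rfl | rfl
    · simpa using hy.symm
    · simpa using hxy
  have := LinearIndependent.linearIndepOn_id h
  have hr : Set.range ![x, y] = {x, y} := by
    ext w
    constructor
    · rintro ⟨i, rfl⟩; fin_cases i <;> simp
    · rintro (rfl | rfl); exacts [⟨0, rfl⟩, ⟨1, rfl⟩]
  rwa [hr] at this

lemma exists_lequiv {x y x' y' : V n} (hx : x ≠ 0) (hy : y ≠ 0) (hxy : x ≠ y)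
    (hx' : x' ≠ 0) (hy' : y' ≠ 0) (hxy' : x' ≠ y') :
    ∃ f : V n ≃ₗ[ZMod 2] V n, f x = x' ∧ f y = y' := by
  classical
  have hs : LinearIndepOn (ZMod 2) id ({x, y} : Set (V n)) := li_pair hx hy hxy
  have hs' : LinearIndepOn (ZMod 2) id ({x', y'} : Set (V n)) := li_pair hx' hy' hxy'
  set S := LinearIndepOn.extend hs (Set.subset_univ _) with hS
  set S' := LinearIndepOn.extend hs' (Set.subset_univ _) with hS'
  have hsub : ({x, y} : Set (V n)) ⊆ S := LinearIndepOn.subset_extend hs _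
  have hsub' : ({x', y'} : Set (V n)) ⊆ S' := LinearIndepOn.subset_extend hs' _
  let b := Module.Basis.extend hs
  let b' := Module.Basis.extend hs'
  haveI : Fintype S := Fintype.ofFinite _
  haveI : Fintype S' := Fintype.ofFinite _
  have hcard : Fintype.card S = Fintype.card S' := by
    rw [← Module.finrank_eq_card_basis b, ← Module.finrank_eq_card_basis b']
  -- elements
  let xS : S := ⟨x, hsub (by simp)⟩
  let yS : S := ⟨y, hsub (by simp)⟩
  let xS' : S' := ⟨x', hsub' (by simp)⟩
  let yS' : S' := ⟨y', hsub' (by simp)⟩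
  have hvne : xS ≠ yS := by simp [xS, yS, Subtype.ext_iff, hxy]
  have hvne' : xS' ≠ yS' := by simp [xS', yS', Subtype.ext_iff, hxy']
  obtain ⟨e, he1, he2⟩ : ∃ e : S ≃ S', e xS = xS' ∧ e yS = yS' := by
    let e0 : S ≃ S' := Fintype.equivOfCardEq hcard
    let σ1 : Equiv.Perm S' := Equiv.swap (e0 xS) xS'
    have h1 : σ1 (e0 xS) = xS' := Equiv.swap_apply_left _ _
    have hy1 : σ1 (e0 yS) ≠ xS' := by
      rw [← h1]
      exact fun h => hvne (e0.injective (σ1.injective h)).symm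
    let σ2 : Equiv.Perm S' := Equiv.swap (σ1 (e0 yS)) yS'
    refine ⟨e0.trans (σ1.trans σ2), ?_, ?_⟩
    · simp only [Equiv.trans_apply, h1]
      exact Equiv.swap_apply_of_ne_of_ne (Ne.symm hy1) hvne'
    · simp only [Equiv.trans_apply]
      exact Equiv.swap_apply_left _ _
  refine ⟨b.equiv b' e, ?_, ?_⟩
  · have := b.equiv_apply xS b' e
    rw [Module.Basis.extend_apply_self] at this
    rw [this, he1, Module.Basis.extend_apply_self]
  · have := b.equiv_apply yS b' e
    rw [Module.Basis.extend_apply_self] at this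
    rw [this, he2, Module.Basis.extend_apply_self]

lemma card_lequiv (f : V n ≃ₗ[ZMod 2] V n) (k : ℕ) (x y : V n) :
    (Finset.univ.filter (fun s : Finset (V n) =>
        (∀ w ∈ s, w ≠ 0) ∧ s.card = k ∧ (∑ w ∈ s, w) = 0 ∧ x ∈ s ∧ y ∈ s)).card
    = (Finset.univ.filter (fun s : Finset (V n) =>
        (∀ w ∈ s, w ≠ 0) ∧ s.card = k ∧ (∑ w ∈ s, w) = 0 ∧ f x ∈ s ∧ f y ∈ s)).card := by
  classical
  have key : ∀ (g : V n ≃ₗ[ZMod 2] V n) (a b : V n) (s : Finset (V n)),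
      ((∀ w ∈ s, w ≠ 0) ∧ s.card = k ∧ (∑ w ∈ s, w) = 0 ∧ a ∈ s ∧ b ∈ s) →
      ((∀ w ∈ s.image g, w ≠ 0) ∧ (s.image g).card = k ∧ (∑ w ∈ s.image g, w) = 0 ∧
        g a ∈ s.image g ∧ g b ∈ s.image g) := by
    intro g a b s ⟨h0, hc, hsum, hxs, hys⟩
    refine ⟨?_, ?_, ?_, Finset.mem_image_of_mem _ hxs, Finset.mem_image_of_mem _ hys⟩
    · intro w hw
      obtain ⟨u, hu, rfl⟩ := Finset.mem_image.1 hw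
      simpa using h0 u hu
    · rw [Finset.card_image_of_injective _ g.injective]; exact hc
    · rw [Finset.sum_image (fun a _ b _ h => g.injective h), ← map_sum, hsum, map_zero]
  refine Finset.card_bij' (fun s _ => s.image f) (fun t _ => t.image f.symm) ?_ ?_ ?_ ?_
  · intro s hs
    rw [Finset.mem_filter] at hs ⊢
    exact ⟨Finset.mem_univ _, key f x y s hs.2⟩
  · intro t ht
    rw [Finset.mem_filter] at ht ⊢
    refine ⟨Finset.mem_univ _, ?_⟩
    have h2 := key f.symm (f x) (f y) t ht.2
    simpa using h2
  · intro s _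
    show (s.image f).image f.symm = s
    rw [Finset.image_image]
    exact Finset.image_congr (fun a _ => f.symm_apply_apply a) |>.trans (Finset.image_id)
  · intro t _
    show (t.image f.symm).image f = t
    rw [Finset.image_image]
    exact Finset.image_congr (fun a _ => f.apply_symm_apply a) |>.trans (Finset.image_id)

theorem stmt_9 (n : ℕ) (hn : 2 ≤ n) (k : ℕ) (hk2 : 2 ≤ k) (hk : k ≤ 2 ^ n - 2) :
    ∃ lam : ℕ, ∀ x y : Fin n → ZMod 2, x ≠ 0 → y ≠ 0 → x ≠ y →
      (Finset.univ.filter (fun s : Finset (Fin n → ZMod 2) =>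
        (∀ w ∈ s, w ≠ 0) ∧ s.card = k ∧ (∑ w ∈ s, w) = 0 ∧
        x ∈ s ∧ y ∈ s)).card = lam := by
  classical
  set x0 : V n := Pi.single ⟨0, by omega⟩ 1 with hx0def
  set y0 : V n := Pi.single ⟨1, by omega⟩ 1 with hy0def
  have hx0 : x0 ≠ 0 := by
    intro h
    have := congrFun h ⟨0, by omega⟩
    simp [hx0def, Pi.single_eq_same] at this
  have hy0 : y0 ≠ 0 := by
    intro h
    have := congrFun h ⟨1, by omega⟩
    simp [hy0def, Pi.single_eq_same] at this
  have hne : x0 ≠ y0 := by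
    intro h
    have := congrFun h ⟨0, by omega⟩
    rw [hx0def, hy0def] at this
    rw [Pi.single_eq_same, Pi.single_eq_of_ne (by simp [Fin.ext_iff])] at this
    exact one_ne_zero this
  refine ⟨(Finset.univ.filter (fun s : Finset (V n) =>
      (∀ w ∈ s, w ≠ 0) ∧ s.card = k ∧ (∑ w ∈ s, w) = 0 ∧ x0 ∈ s ∧ y0 ∈ s)).card,
    fun x y hx hy hxy => ?_⟩
  obtain ⟨f, hfx, hfy⟩ := exists_lequiv hx hy hxy hx0 hy0 hne
  rw [card_lequiv f k x y, hfx, hfy]
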